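/- For every fixed n, the sequence a_{n,k} = C(n,k)·(2k−n+1)/(k+1), for ⌈n/2⌉ ≤ k ≤ n, is log-concave: a_{n,k-1} · a_{n,k+1} ≤ a_{n,k}^2 for all k with ⌈n/2⌉ < k < n. -/

import Mathlib

/-- The ballot number `a_{n,k} = C(n,k)·(2k−n+1)/(k+1)`, the number of
standard Young tableaux of shape `(k, n−k)`. -/
def ballotQ (n k : ℕ) : ℚ :=
  (n.choose k : ℚ) * (2 * (k : ℚ) - (n : ℚ) + 1) / ((k : ℚ) + 1)

set_option maxHeartbeats 1000000 in
theorem ballot_log_concave (n : ℕ) :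
    ∀ k : ℕ, (n + 1) / 2 < k → k < n →
      ballotQ n (k - 1) * ballotQ n (k + 1) ≤ ballotQ n k ^ 2 := by
  intro k hk1 hk2
  have hk0 : 1 ≤ k := by omega
  have h2k : n + 2 ≤ 2 * k := by omega
  have hkn : k ≤ n := by omega
  -- choose identities
  have h1 : n.choose (k + 1) * (k + 1) = n.choose k * (n - k) :=
    Nat.choose_succ_right_eq n k
  have h2 : n.choose k * k = n.choose (k - 1) * (n - k + 1) := by
    have := Nat.choose_succ_right_eq n (k - 1)
    have e1 : k - 1 + 1 = k := by omega
    have e2 : n - (k - 1) = n - k + 1 := by omega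
    rw [e1, e2] at this
    exact this
  set x : ℚ := (k : ℚ) with hx
  set y : ℚ := (n : ℚ) with hy
  set c : ℚ := (n.choose k : ℚ) with hc
  set a : ℚ := (n.choose (k - 1) : ℚ) with ha
  set b : ℚ := (n.choose (k + 1) : ℚ) with hb
  have hxy : x + 1 ≤ y := by
    rw [hx, hy]; exact_mod_cast by omega
  have hu : y + 2 ≤ 2 * x := by
    rw [hx, hy]; exact_mod_cast h2k
  have hx1 : (1 : ℚ) ≤ x := by rw [hx]; exact_mod_cast hk0
  have hcpos : 0 < c := by
    rw [hc]; exact_mod_cast Nat.choose_pos hkn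
  have hcast1 : ((k - 1 : ℕ) : ℚ) = x - 1 := by
    rw [hx]; push_cast [hk0]; ring
  have hQ1 : b * (x + 1) = c * (y - x) := by
    have := congrArg (fun m : ℕ => (m : ℚ)) h1
    push_cast [Nat.cast_sub hkn] at this
    rw [hb, hc, hx, hy]
    linarith [this]
  have hQ2 : c * x = a * (y - x + 1) := by
    have := congrArg (fun m : ℕ => (m : ℚ)) h2
    push_cast [Nat.cast_sub hkn] at this
    rw [ha, hc, hx, hy]
    linarith [this]
  have hapos : 0 < y - x + 1 := by linarith
  have hbpos : 0 < x + 1 := by linarith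
  have haeq : a = c * x / (y - x + 1) := by
    field_simp
    linarith [hQ2]
  have hbeq : b = c * (y - x) / (x + 1) := by
    field_simp
    linarith [hQ1]
  unfold ballotQ
  rw [hcast1]
  rw [← hc, ← ha, ← hb, ← hx, ← hy]
  rw [haeq, hbeq]
  have hxpos : (0:ℚ) < x := by linarith
  have hx2 : (0:ℚ) < x + 2 := by linarith
  clear_value a b c x y
  push_cast
  rw [← hx]
  have hne1 : y - x + 1 ≠ 0 := ne_of_gt hapos
  have hne2 : x + 1 ≠ 0 := ne_of_gt hbpos
  have hne3 : x - 1 + 1 ≠ 0 := by intro h; nlinarith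
  have hne4 : x + 1 + 1 ≠ 0 := by intro h; nlinarith
  field_simp
  rw [div_le_iff₀ (by linarith)]
  have hu1 : (0:ℚ) ≤ 2*x - y - 1 := by linarith
  have hv1 : (0:ℚ) ≤ y - x := by linarith
  have key : (2*x-y-1)*(y-x)*(2*x-y+3)*(x+1) ≤ (2*x-y+1)^2*(y-x+1)*(x+2) := by
    have hdec : (2*x-y+1)^2*(y-x+1)*(x+2) - (2*x-y-1)*(y-x)*(2*x-y+3)*(x+1)
        = ((2*x-y-1)^2+4*(2*x-y-1))*((2*x-y-1)+2*(y-x)+3)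
          + 4*((y-x)+1)*((2*x-y-1)+(y-x)+3) := by ring
    have t1 : 0 ≤ ((2*x-y-1)^2+4*(2*x-y-1))*((2*x-y-1)+2*(y-x)+3) :=
      mul_nonneg (by nlinarith [sq_nonneg (2*x-y-1)]) (by linarith)
    have t2 : 0 ≤ 4*((y-x)+1)*((2*x-y-1)+(y-x)+3) :=
      mul_nonneg (by linarith) (by linarith)
    linarith
  nlinarith [mul_nonneg hxpos.le (sub_nonneg.2 key)]
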